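/- Suppose L(Q) = ∑_{i=1}^n A_i Q^{a_i} + ∑_{j=1}^m B_j Q^{−b_j}, where A_i, B_j, a_i, b_j are all positive reals, and suppose Q₁ ≤ Q₂. Then there exists Q* ∈ [Q₁, Q₂] such that L(Q*) ≪ ∑_{i=1}^n A_i Q₁^{a_i} + ∑_{j=1}^m B_j Q₂^{−b_j} + ∑_{i=1}^n ∑_{j=1}^m (A_i^{b_j} B_j^{a_i})^{1/(a_i + b_j)}, where the implied constant depends only on n and m. -/

import Mathlib

open Finset

lemma min_le_geom {x y θ : ℝ} (hx : 0 ≤ x) (hy : 0 ≤ y) (hθ : 0 ≤ θ) (hθ1 : θ ≤ 1) :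
    min x y ≤ x ^ θ * y ^ (1 - θ) := by
  rcases eq_or_lt_of_le (le_min hx hy) with h | h
  · rw [← h]
    positivity
  · calc min x y = min x y ^ θ * min x y ^ (1 - θ) := by
          rw [← Real.rpow_add h]; simp
      _ ≤ x ^ θ * y ^ (1 - θ) := by
          have := le_min hx hy
          exact mul_le_mul (Real.rpow_le_rpow this (min_le_left _ _) hθ)
            (Real.rpow_le_rpow this (min_le_right _ _) (by linarith))
            (Real.rpow_nonneg this _) (Real.rpow_nonneg hx _)

lemma geom_eq {A B α β Q : ℝ} (hA : 0 < A) (hB : 0 < B) (hα : 0 < α) (hβ : 0 < β) (hQ : 0 < Q) :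
    (A * Q ^ α) ^ (β/(α+β)) * (B * Q ^ (-β)) ^ (α/(α+β)) = (A ^ β * B ^ α) ^ (1/(α+β)) := by
  have hαβ : (0:ℝ) < α + β := by linarith
  have h1 : 0 < A * Q ^ α := by positivity
  have h2 : 0 < B * Q ^ (-β) := by positivity
  have hL : 0 < (A * Q ^ α) ^ (β/(α+β)) * (B * Q ^ (-β)) ^ (α/(α+β)) := by positivity
  have hR : 0 < (A ^ β * B ^ α) ^ (1/(α+β)) := by positivity
  apply Real.log_injOn_pos (Set.mem_Ioi.mpr hL) (Set.mem_Ioi.mpr hR)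
  rw [Real.log_mul (by positivity) (by positivity), Real.log_rpow h1, Real.log_rpow h2,
      Real.log_rpow (by positivity), Real.log_mul hA.ne' (by positivity),
      Real.log_mul hB.ne' (by positivity), Real.log_rpow hQ, Real.log_rpow hQ,
      Real.log_mul (by positivity) (by positivity), Real.log_rpow hA, Real.log_rpow hB]
  field_simp
  ring

set_option maxHeartbeats 1000000 in
/-- Graham–Kolesnik optimization lemma (Lemma 2.4). -/
theorem stmt_10 (n m : ℕ) :
    ∃ C : ℝ, 0 < C ∧ ∀ (A a : Fin n → ℝ) (B b : Fin m → ℝ),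
      (∀ i, 0 < A i) → (∀ i, 0 < a i) → (∀ j, 0 < B j) → (∀ j, 0 < b j) →
      ∀ Q₁ Q₂ : ℝ, 0 < Q₁ → Q₁ ≤ Q₂ →
        ∃ Q ∈ Set.Icc Q₁ Q₂,
          (∑ i, A i * Q ^ (a i)) + (∑ j, B j * Q ^ (-(b j))) ≤
            C * ((∑ i, A i * Q₁ ^ (a i)) + (∑ j, B j * Q₂ ^ (-(b j))) +
              ∑ i, ∑ j, (A i ^ (b j) * B j ^ (a i)) ^ (1 / (a i + b j))) := by
  refine ⟨2*(n+m)+2, by positivity, ?_⟩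
  intro A a B b hA ha hB hb Q₁ Q₂ hQ₁ hle
  have hQ₂ : 0 < Q₂ := lt_of_lt_of_le hQ₁ hle
  set C : ℝ := 2*(n+m)+2 with hCdef
  have hC2 : (2:ℝ) ≤ C := by
    have : (0:ℝ) ≤ 2*(n+m) := by positivity
    simp [hCdef]; linarith
  set F : ℝ → ℝ := fun Q => ∑ i, A i * Q ^ (a i) with hFdef
  set G : ℝ → ℝ := fun Q => ∑ j, B j * Q ^ (-(b j)) with hGdef
  set T : ℝ := ∑ i, ∑ j, (A i ^ (b j) * B j ^ (a i)) ^ (1 / (a i + b j)) with hTdef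
  have hterm : ∀ i j, 0 ≤ (A i ^ (b j) * B j ^ (a i)) ^ (1 / (a i + b j)) := fun i j =>
    Real.rpow_nonneg (mul_nonneg (Real.rpow_nonneg (hA i).le _)
      (Real.rpow_nonneg (hB j).le _)) _
  have hFnn : ∀ Q : ℝ, 0 < Q → 0 ≤ F Q := fun Q hQ =>
    Finset.sum_nonneg fun i _ => mul_nonneg (hA i).le (Real.rpow_nonneg hQ.le _)
  have hGnn : ∀ Q : ℝ, 0 < Q → 0 ≤ G Q := fun Q hQ =>
    Finset.sum_nonneg fun j _ => mul_nonneg (hB j).le (Real.rpow_nonneg hQ.le _)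
  have hTnn : 0 ≤ T :=
    Finset.sum_nonneg fun i _ => Finset.sum_nonneg fun j _ => hterm i j
  by_cases h1 : G Q₁ ≤ F Q₁
  · refine ⟨Q₁, ⟨le_refl _, hle⟩, ?_⟩
    show F Q₁ + G Q₁ ≤ C * (F Q₁ + G Q₂ + T)
    nlinarith [hFnn Q₁ hQ₁, hGnn Q₂ hQ₂, hTnn]
  by_cases h2 : F Q₂ ≤ G Q₂
  · refine ⟨Q₂, ⟨hle, le_refl _⟩, ?_⟩
    show F Q₂ + G Q₂ ≤ C * (F Q₁ + G Q₂ + T)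
    nlinarith [hFnn Q₁ hQ₁, hGnn Q₂ hQ₂, hFnn Q₂ hQ₂, hTnn]
  push_neg at h1 h2
  -- continuity and IVT
  have hcF : ContinuousOn F (Set.Icc Q₁ Q₂) := by
    apply continuousOn_finset_sum
    intro i _
    exact continuousOn_const.mul (fun x hx =>
      (Real.continuousAt_rpow_const x (a i)
        (Or.inl (ne_of_gt (lt_of_lt_of_le hQ₁ hx.1)))).continuousWithinAt)
  have hcG : ContinuousOn G (Set.Icc Q₁ Q₂) := by
    apply continuousOn_finset_sum
    intro j _
    exact continuousOn_const.mul (fun x hx =>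
      (Real.continuousAt_rpow_const x (-(b j))
        (Or.inl (ne_of_gt (lt_of_lt_of_le hQ₁ hx.1)))).continuousWithinAt)
  have hIVT := intermediate_value_Icc hle (hcF.sub hcG)
  have h0mem : (0:ℝ) ∈ Set.Icc (F Q₁ - G Q₁) (F Q₂ - G Q₂) :=
    ⟨by linarith, by linarith⟩
  obtain ⟨Q, hQmem, hQeq⟩ := hIVT h0mem
  have hQeq' : F Q = G Q := by
    have : F Q - G Q = 0 := hQeq
    linarith
  have hQpos : 0 < Q := lt_of_lt_of_le hQ₁ hQmem.1
  refine ⟨Q, hQmem, ?_⟩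
  show F Q + G Q ≤ C * (F Q₁ + G Q₂ + T)
  -- nonemptiness
  have hFQ₂pos : 0 < F Q₂ := lt_of_le_of_lt (hGnn Q₂ hQ₂) h2
  have hGQ₁pos : 0 < G Q₁ := lt_of_le_of_lt (hFnn Q₁ hQ₁) h1
  have hn : (Finset.univ : Finset (Fin n)).Nonempty := by
    rcases (Finset.univ : Finset (Fin n)).eq_empty_or_nonempty with h | h
    · exfalso
      have : F Q₂ = 0 := by rw [hFdef]; simp only [h, Finset.sum_empty]
      linarith
    · exact h
  have hm : (Finset.univ : Finset (Fin m)).Nonempty := by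
    rcases (Finset.univ : Finset (Fin m)).eq_empty_or_nonempty with h | h
    · exfalso
      have : G Q₁ = 0 := by rw [hGdef]; simp only [h, Finset.sum_empty]
      linarith
    · exact h
  obtain ⟨i₀, -, hi₀⟩ := Finset.exists_max_image Finset.univ (fun i => A i * Q ^ (a i)) hn
  obtain ⟨j₀, -, hj₀⟩ := Finset.exists_max_image Finset.univ (fun j => B j * Q ^ (-(b j))) hm
  set x : ℝ := A i₀ * Q ^ (a i₀) with hxdef
  set y : ℝ := B j₀ * Q ^ (-(b j₀)) with hydef
  have hx : 0 < x := mul_pos (hA i₀) (Real.rpow_pos_of_pos hQpos _)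
  have hy : 0 < y := mul_pos (hB j₀) (Real.rpow_pos_of_pos hQpos _)
  have hFle : F Q ≤ n * x := by
    calc F Q ≤ ∑ _i : Fin n, x := Finset.sum_le_sum fun i _ => hi₀ i (Finset.mem_univ i)
      _ = n * x := by simp [Finset.sum_const, Finset.card_univ, nsmul_eq_mul]
  have hGle : G Q ≤ m * y := by
    calc G Q ≤ ∑ _j : Fin m, y := Finset.sum_le_sum fun j _ => hj₀ j (Finset.mem_univ j)
      _ = m * y := by simp [Finset.sum_const, Finset.card_univ, nsmul_eq_mul]
  set c : ℝ := (A i₀ ^ (b j₀) * B j₀ ^ (a i₀)) ^ (1 / (a i₀ + b j₀)) with hcdef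
  have hab : 0 < a i₀ + b j₀ := by have := ha i₀; have := hb j₀; linarith
  have hmin : min x y ≤ c := by
    have hθ0 : 0 ≤ b j₀ / (a i₀ + b j₀) := div_nonneg (hb j₀).le hab.le
    have hθ1 : b j₀ / (a i₀ + b j₀) ≤ 1 := by
      rw [div_le_one hab]; have := ha i₀; linarith
    have h1θ : 1 - b j₀ / (a i₀ + b j₀) = a i₀ / (a i₀ + b j₀) := by
      field_simp
      ring
    have := min_le_geom hx.le hy.le hθ0 hθ1
    rw [h1θ] at this
    calc min x y ≤ x ^ (b j₀ / (a i₀ + b j₀)) * y ^ (a i₀ / (a i₀ + b j₀)) := this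
      _ = c := geom_eq (hA i₀) (hB j₀) (ha i₀) (hb j₀) hQpos
  have hcT : c ≤ T := by
    rw [hTdef]
    calc c ≤ ∑ j, (A i₀ ^ (b j) * B j ^ (a i₀)) ^ (1 / (a i₀ + b j)) := by
          exact Finset.single_le_sum (f := fun j => (A i₀ ^ (b j) * B j ^ (a i₀)) ^ (1 / (a i₀ + b j)))
            (fun j _ => hterm i₀ j) (Finset.mem_univ j₀)
      _ ≤ ∑ i, ∑ j, (A i ^ (b j) * B j ^ (a i)) ^ (1 / (a i + b j)) := by
          exact Finset.single_le_sum
            (f := fun i => ∑ j, (A i ^ (b j) * B j ^ (a i)) ^ (1 / (a i + b j)))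
            (fun i _ => Finset.sum_nonneg fun j _ => hterm i j) (Finset.mem_univ i₀)
  clear_value C F G T x y c
  have hkey : F Q + G Q ≤ 2 * ((n:ℝ) + m) * min x y := by
    rcases le_total x y with hxy | hxy
    · have hmx : min x y = x := min_eq_left hxy
      have : F Q ≤ ((n:ℝ) + m) * x := by
        have hm0 : (0:ℝ) ≤ m := by positivity
        nlinarith
      rw [hmx]; rw [← hQeq'] at *; linarith
    · have hmy : min x y = y := min_eq_right hxy
      have : G Q ≤ ((n:ℝ) + m) * y := by
        have hn0 : (0:ℝ) ≤ n := by positivity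
        nlinarith
      rw [hmy]; rw [hQeq'] at *; linarith
  have hnm1 : (1:ℝ) ≤ (n:ℝ) + m := by
    have : 1 ≤ n := Nat.one_le_iff_ne_zero.mpr (by rintro rfl; exact hn.ne_empty (by simp))
    have h' : (1:ℝ) ≤ (n:ℝ) := by exact_mod_cast this
    have : (0:ℝ) ≤ m := by positivity
    linarith
  have hminc : 2 * ((n:ℝ) + m) * min x y ≤ 2 * ((n:ℝ) + m) * c := by
    apply mul_le_mul_of_nonneg_left hmin; linarith
  have : 2 * ((n:ℝ) + m) * c ≤ C * T := by
    have hcnn : 0 ≤ c := le_trans (le_min hx.le hy.le) hmin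
    rw [hCdef]
    nlinarith
  have hrest : C * T ≤ C * (F Q₁ + G Q₂ + T) := by
    apply mul_le_mul_of_nonneg_left _ (by linarith)
    have := hFnn Q₁ hQ₁; have := hGnn Q₂ hQ₂; linarith
  linarith
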